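/- For a mosaic G and a subset N ⊆ G, N is a strict submosaic of G if and only if the function φ_N : G → K sending elements of N to 0 and all other elements to 1 is a unit-preserving morphism of mosaics, where K is the additive hypergroup of the Krasner hyperfield. Consequently, strict submosaics of G are in natural bijection with morphisms G → K. -/

import Mathlib

open Classical

/-- The additive hypergroup of the Krasner hyperfield, on `Fin 2` with identity `0`. -/
def kadd : Fin 2 → Fin 2 → Set (Fin 2) := fun a b =>
  if a = 0 then {b} else if b = 0 then {a} else Set.univ

/-- For a mosaic `G` and `N ⊆ G`, `N` is a strict submosaic iff the indicator-type map
`φ_N` (sending `N` to `0` and its complement to `1`) is a unit-preserving morphism to the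
Krasner mosaic `K`; moreover `N ↦ φ_N` is a bijection between strict submosaics and
morphisms `G → K`. -/
theorem stmt_12 {G : Type*} (star : G → G → Set G) (e : G) (inv : G → G)
    (hid : ∀ x : G, star e x = {x} ∧ star x e = {x})
    (hrev : ∀ x y z : G, x ∈ star y z → y ∈ star x (inv z) ∧ z ∈ star (inv y) x) :
    (∀ N : Set G,
      (e ∈ N ∧ (∀ x ∈ N, inv x ∈ N) ∧ ∀ x ∈ N, ∀ y ∈ N, star x y ⊆ N) ↔
      ((fun x => if x ∈ N then (0 : Fin 2) else 1) e = 0 ∧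
        ∀ x y : G, ∀ z ∈ star x y,
          (if z ∈ N then (0 : Fin 2) else 1) ∈
            kadd (if x ∈ N then (0 : Fin 2) else 1) (if y ∈ N then (0 : Fin 2) else 1))) ∧
    (∀ f : G → Fin 2,
      (f e = 0 ∧ ∀ x y : G, ∀ z ∈ star x y, f z ∈ kadd (f x) (f y)) →
      ∃! N : Set G,
        (e ∈ N ∧ (∀ x ∈ N, inv x ∈ N) ∧ ∀ x ∈ N, ∀ y ∈ N, star x y ⊆ N) ∧
        (fun x => if x ∈ N then (0 : Fin 2) else 1) = f) := by
  have key : ∀ N : Set G,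
      (e ∈ N ∧ (∀ x ∈ N, inv x ∈ N) ∧ ∀ x ∈ N, ∀ y ∈ N, star x y ⊆ N) ↔
      ((fun x => if x ∈ N then (0 : Fin 2) else 1) e = 0 ∧
        ∀ x y : G, ∀ z ∈ star x y,
          (if z ∈ N then (0 : Fin 2) else 1) ∈
            kadd (if x ∈ N then (0 : Fin 2) else 1) (if y ∈ N then (0 : Fin 2) else 1)) := by
    intro N
    constructor
    · rintro ⟨heN, hinvN, hclosed⟩
      refine ⟨by simp [heN], ?_⟩
      intro x y z hz
      by_cases hx : x ∈ N <;> by_cases hy : y ∈ N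
      · have hzN : z ∈ N := hclosed x hx y hy hz
        simp [kadd, hx, hy, hzN]
      · -- x ∈ N, y ∉ N : need z ∉ N
        have hzN : z ∉ N := by
          intro hzN
          have := (hrev z x y hz).2
          exact hy (hclosed (inv x) (hinvN x hx) z hzN this)
        simp [kadd, hx, hy, hzN]
      · have hzN : z ∉ N := by
          intro hzN
          have := (hrev z x y hz).1
          exact hx (hclosed z hzN (inv y) (hinvN y hy) this)
        simp [kadd, hx, hy, hzN]
      · simp [kadd, hx, hy]
    · rintro ⟨h0, hmor⟩
      simp only at h0
      have heN : e ∈ N := by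
        by_contra h; simp [h] at h0
      have hclosed : ∀ x ∈ N, ∀ y ∈ N, star x y ⊆ N := by
        intro x hx y hy z hz
        have := hmor x y z hz
        simp only [kadd, hx, hy, if_true, if_pos] at this
        by_contra hzN
        simp [hzN] at this
      refine ⟨heN, ?_, hclosed⟩
      intro x hx
      have hx_in : x ∈ star e x := by rw [(hid x).1]; rfl
      have hEinv : e ∈ star x (inv x) := (hrev x e x hx_in).1
      have := hmor x (inv x) e hEinv
      by_contra hinvx
      simp [kadd, hx, hinvx, heN] at this
  refine ⟨key, ?_⟩
  intro f ⟨hf0, hfmor⟩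
  refine ⟨{x | f x = 0}, ⟨?_, ?_⟩, ?_⟩
  · have heq : (fun x => if x ∈ {x | f x = 0} then (0 : Fin 2) else 1) = f := by
      funext x
      by_cases hx : f x = 0
      · simp [hx]
      · have : f x = 1 := Fin.eq_one_of_ne_zero _ hx
        simp [Set.mem_setOf_eq, hx, this]
    rw [key]
    have hc : ∀ x, (if x ∈ {x | f x = 0} then (0 : Fin 2) else 1) = f x :=
      fun x => congrFun heq x
    refine ⟨by simp [Set.mem_setOf_eq, hf0], ?_⟩
    intro x y z hz
    have H := hfmor x y z hz
    by_cases h1 : f x = 0 <;> by_cases h2 : f y = 0 <;> by_cases h3 : f z = 0 <;>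
      simp_all [kadd, Set.mem_setOf_eq]
  · funext x
    by_cases hx : f x = 0
    · simp [hx]
    · have : f x = 1 := Fin.eq_one_of_ne_zero _ hx
      simp [Set.mem_setOf_eq, hx, this]
  · rintro N ⟨-, hNeq⟩
    ext x
    have := congrFun hNeq x
    simp only [Set.mem_setOf_eq]
    by_cases hx : x ∈ N
    · simp [hx] at this; simp [hx, ← this]
    · simp [hx] at this
      simp [hx, ← this]
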